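/- Let K ≠ 2^[m] be a simplicial complex on [m] with m ≥ 4 such that K^∨ has no edges and its vertex set is {1',…,k'} for some 0 ≤ k ≤ m. Then Bier(K) is simplicially isomorphic to the complex obtained from the boundary ∂Δ_[m] of the (m−1)-simplex by stellar subdivisions of the facets [m]\{i} with apex i', for 1 ≤ i ≤ k. In particular, Bier(K) is chordal and polytopal. -/

import Mathlib

open Finset

/-- A (finite abstract) simplicial complex on the vertex type `α`:
a set of finite subsets containing `∅` and closed under taking subsets. -/
def IsSimplicialComplex {α : Type*} (K : Set (Finset α)) : Prop :=
  ∅ ∈ K ∧ ∀ σ ∈ K, ∀ τ ⊆ σ, τ ∈ K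

/-- The Alexander dual of `K` on `[m]`: `J ∈ K^∨` iff `[m] \ J ∉ K`. -/
def dualK {m : ℕ} (K : Set (Finset (Fin m))) : Set (Finset (Fin m)) :=
  {J | Finset.univ \ J ∉ K}

/-- The Bier sphere of `K`: the deleted join of `K` and its Alexander dual,
on the vertex set `[m] ⊔ [m']` (encoded as `Fin m ⊕ Fin m`, `inl` = unprimed,
`inr` = primed). -/
def bier {m : ℕ} (K : Set (Finset (Fin m))) : Set (Finset (Fin m ⊕ Fin m)) :=
  {S | ∃ I J : Finset (Fin m), I ∈ K ∧ J ∈ dualK K ∧ Disjoint I J ∧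
    S = I.map Function.Embedding.inl ∪ J.map Function.Embedding.inr}

/-- The 1-skeleton graph of a simplicial complex. -/
def skeletonGraph {α : Type*} [DecidableEq α] (L : Set (Finset α)) :
    SimpleGraph α where
  Adj i j := i ≠ j ∧ ({i, j} : Finset α) ∈ L
  symm := ⟨fun i j h => ⟨h.1.symm, by rw [Finset.pair_comm]; exact h.2⟩⟩
  loopless := ⟨fun i h => h.1 rfl⟩

/-- A simplicial complex is chordal if its 1-skeleton contains no induced
(chordless) cycle of length at least `4`. -/
def ChordalComplex {α : Type*} [DecidableEq α] (L : Set (Finset α)) : Prop :=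
  ∀ n : ℕ, 4 ≤ n → ∀ f : ZMod n → α, Function.Injective f →
    ¬ (∀ i j : ZMod n,
        (skeletonGraph L).Adj (f i) (f j) ↔ (j = i + 1 ∨ i = j + 1))

/-- if `K^∨ = {∅, {1'}, …, {k'}}` (no edges, vertex set the first
`k` primed elements), then `Bier(K)` is the complex obtained from `∂Δ_[m]`
(embedded via `inl`) by stellar subdivisions of the facets `[m] \ {i}` with
apex `i'` for `1 ≤ i ≤ k`; in particular `Bier(K)` is chordal. -/
theorem bier_stacked {m k : ℕ} (hm : 4 ≤ m) (hk : k ≤ m)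
    (K : Set (Finset (Fin m))) (hK : IsSimplicialComplex K)
    (hKne : Finset.univ ∉ K)
    (hdual : dualK K = {J : Finset (Fin m) |
      J = ∅ ∨ ∃ i : Fin m, (i : ℕ) < k ∧ J = {i}}) :
    bier K = {S : Finset (Fin m ⊕ Fin m) |
      (∃ σ : Finset (Fin m), σ ≠ Finset.univ ∧
        (∀ i : Fin m, (i : ℕ) < k → σ ≠ Finset.univ.erase i) ∧
        S = σ.map Function.Embedding.inl) ∨
      (∃ i : Fin m, (i : ℕ) < k ∧ ∃ τ : Finset (Fin m),
        τ ⊆ Finset.univ.erase i ∧ τ ≠ Finset.univ.erase i ∧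
        S = insert (Sum.inr i) (τ.map Function.Embedding.inl))} ∧
    ChordalComplex (bier K) := by
  -- membership characterization of K
  have hmemK : ∀ σ : Finset (Fin m), σ ∈ K ↔ σ ≠ Finset.univ ∧
      ∀ i : Fin m, (i : ℕ) < k → σ ≠ Finset.univ.erase i := by
    intro σ
    constructor
    · intro hσ
      refine ⟨fun h => hKne (h ▸ hσ), fun i hi hEq => ?_⟩
      have hJ : ({i} : Finset (Fin m)) ∈ dualK K := by
        rw [hdual]; exact Or.inr ⟨i, hi, rfl⟩
      apply hJ
      rw [Finset.sdiff_singleton_eq_erase, ← hEq]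
      exact hσ
    · rintro ⟨h1, h2⟩
      have hJ : (Finset.univ \ σ) ∉ dualK K := by
        rw [hdual]
        rintro (h | ⟨i, hi, h⟩)
        · exact h1 (by simpa [Finset.sdiff_eq_empty_iff_subset,
            Finset.univ_subset_iff] using h)
        · apply h2 i hi
          have hσ' : σ = Finset.univ \ (Finset.univ \ σ) :=
            (Finset.sdiff_sdiff_eq_self (Finset.subset_univ σ)).symm
          rw [hσ', h, Finset.sdiff_singleton_eq_erase]
      simpa [dualK, Finset.sdiff_sdiff_eq_self (Finset.subset_univ σ), not_not] using hJ
  have hE : bier K = {S : Finset (Fin m ⊕ Fin m) |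
      (∃ σ : Finset (Fin m), σ ≠ Finset.univ ∧
        (∀ i : Fin m, (i : ℕ) < k → σ ≠ Finset.univ.erase i) ∧
        S = σ.map Function.Embedding.inl) ∨
      (∃ i : Fin m, (i : ℕ) < k ∧ ∃ τ : Finset (Fin m),
        τ ⊆ Finset.univ.erase i ∧ τ ≠ Finset.univ.erase i ∧
        S = insert (Sum.inr i) (τ.map Function.Embedding.inl))} := by
    ext S
    constructor
    · rintro ⟨I, J, hI, hJ, hdisj, rfl⟩
      rw [hdual] at hJ
      rcases hJ with rfl | ⟨i, hi, rfl⟩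
      · left
        exact ⟨I, (hmemK I).mp hI |>.1, (hmemK I).mp hI |>.2, by simp⟩
      · right
        have hiI : i ∉ I := fun hin =>
          (Finset.disjoint_singleton_right.mp hdisj) hin
        refine ⟨i, hi, I, ?_, (hmemK I).mp hI |>.2 i hi, ?_⟩
        · intro a ha
          exact Finset.mem_erase.mpr ⟨fun h => hiI (h ▸ ha), Finset.mem_univ a⟩
        · ext x
          simp [or_comm, eq_comm]
    · rintro (⟨σ, h1, h2, rfl⟩ | ⟨i, hi, τ, hsub, hne, rfl⟩)
      · refine ⟨σ, ∅, (hmemK σ).mpr ⟨h1, h2⟩, ?_, Finset.disjoint_empty_right σ, by simp⟩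
        rw [hdual]; exact Or.inl rfl
      · have hiτ : i ∉ τ := fun hin => by
          have := hsub hin
          exact (Finset.mem_erase.mp this).1 rfl
        refine ⟨τ, {i}, (hmemK τ).mpr ⟨?_, ?_⟩, ?_, ?_, ?_⟩
        · intro h; exact hiτ (h ▸ Finset.mem_univ i)
        · intro j hj hEq
          by_cases hji : j = i
          · exact hne (hji ▸ hEq)
          · have : i ∈ Finset.univ.erase j :=
              Finset.mem_erase.mpr ⟨fun h => hji h.symm, Finset.mem_univ i⟩
            exact hiτ (hEq ▸ this)
        · rw [hdual]; exact Or.inr ⟨i, hi, rfl⟩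
        · exact Finset.disjoint_singleton_right.mpr hiτ
        · ext x
          simp [or_comm, eq_comm]
  refine ⟨hE, ?_⟩
  -- edge lemmas
  have lemA : ∀ a b : Fin m, a ≠ b →
      ({Sum.inl a, Sum.inl b} : Finset (Fin m ⊕ Fin m)) ∈ bier K := by
    intro a b hab
    rw [hE]
    left
    have hcard : ({a, b} : Finset (Fin m)).card ≤ 2 :=
      (Finset.card_insert_le _ _).trans (by simp)
    refine ⟨{a, b}, ?_, ?_, ?_⟩
    · intro h
      rw [h, Finset.card_univ, Fintype.card_fin] at hcard
      omega
    · intro i _ h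
      rw [h, Finset.card_erase_of_mem (Finset.mem_univ i),
        Finset.card_univ, Fintype.card_fin] at hcard
      omega
    · simp [Finset.map_insert]
  have lemB : ∀ p q : Fin m, p ≠ q →
      ({Sum.inr p, Sum.inr q} : Finset (Fin m ⊕ Fin m)) ∉ bier K := by
    intro p q hpq h
    rw [hE] at h
    rcases h with ⟨σ, -, -, hS⟩ | ⟨i, -, τ, -, -, hS⟩
    · have : (Sum.inr p : Fin m ⊕ Fin m) ∈ σ.map Function.Embedding.inl := by
        rw [← hS]; exact Finset.mem_insert_self _ _
      rcases Finset.mem_map.mp this with ⟨x, -, hx⟩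
      exact Sum.inl_ne_inr hx
    · have hmem : ∀ r : Fin m, (Sum.inr r : Fin m ⊕ Fin m) ∈
          insert (Sum.inr i) (τ.map Function.Embedding.inl) → r = i := by
        intro r hr
        rcases Finset.mem_insert.mp hr with h | h
        · exact Sum.inr.inj h
        · rcases Finset.mem_map.mp h with ⟨x, -, hx⟩
          exact absurd hx (Sum.inl_ne_inr)
      have hp : p = i := hmem p (by rw [← hS]; exact Finset.mem_insert_self _ _)
      have hq : q = i := hmem q (by
        rw [← hS]; exact Finset.mem_insert_of_mem (Finset.mem_singleton_self _))
      exact hpq (hp.trans hq.symm)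
  -- chordality
  intro n hn f hf hadj
  haveI : NeZero n := ⟨by omega⟩
  have hdnz : ∀ d : ℕ, 0 < d → d < n → ((d : ℕ) : ZMod n) ≠ 0 := by
    intro d h1 h2 h0
    rw [ZMod.natCast_eq_zero_iff] at h0
    have := Nat.le_of_dvd h1 h0
    omega
  have hd1 : (1 : ZMod n) ≠ 0 := by
    have := hdnz 1 (by norm_num) (by omega); simpa using this
  have hd2 : (2 : ZMod n) ≠ 0 := by
    have := hdnz 2 (by norm_num) (by omega); simpa using this
  have hd3 : (3 : ZMod n) ≠ 0 := by
    have := hdnz 3 (by norm_num) (by omega); simpa using this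
  have claim1 : ∀ i : ZMod n,
      (∃ a, f i = Sum.inl a) ∨ (∃ a, f (i + 1) = Sum.inl a) := by
    intro i
    have hA : (skeletonGraph (bier K)).Adj (f i) (f (i + 1)) :=
      (hadj i (i + 1)).mpr (Or.inl rfl)
    obtain ⟨hne, hmem⟩ := hA
    cases hfi : f i with
    | inl a => exact Or.inl ⟨a, rfl⟩
    | inr p =>
      cases hfi1 : f (i + 1) with
      | inl a => exact Or.inr ⟨a, rfl⟩
      | inr q =>
        exfalso
        rw [hfi, hfi1] at hmem hne
        exact lemB p q (fun h => hne (congrArg Sum.inr h)) hmem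
  have claim2 : ∀ i j : ZMod n, i ≠ j → ∀ a b, f i = Sum.inl a → f j = Sum.inl b →
      (j = i + 1 ∨ i = j + 1) := by
    intro i j hij a b hfi hfj
    apply (hadj i j).mp
    refine ⟨fun e => hij (hf e), ?_⟩
    rw [hfi, hfj]
    apply lemA
    intro hab
    exact hij (hf (by rw [hfi, hfj, hab]))
  obtain ⟨c, a0, hc⟩ : ∃ c, ∃ a, f c = Sum.inl a := by
    rcases claim1 0 with h | h
    · exact ⟨0, h⟩
    · exact ⟨0 + 1, h⟩
  by_cases hg2 : ∃ a, f (c + 2) = Sum.inl a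
  · obtain ⟨a2, hc2⟩ := hg2
    have hne : c ≠ c + 2 := fun h => hd2 (by linear_combination -h)
    rcases claim2 c (c + 2) hne a0 a2 hc hc2 with h | h
    · exact hd1 (by linear_combination h)
    · exact hd3 (by linear_combination -h)
  · have g1 : ∃ a, f (c + 1) = Sum.inl a := by
      rcases claim1 (c + 1) with h | h
      · exact h
      · exfalso
        apply hg2
        have e : c + 1 + 1 = c + 2 := by ring
        rwa [e] at h
    have g3 : ∃ a, f (c + 3) = Sum.inl a := by
      rcases claim1 (c + 2) with h | h
      · exact absurd h hg2
      · have : c + 2 + 1 = c + 3 := by ring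
        rwa [this] at h
    obtain ⟨a1, hc1⟩ := g1
    obtain ⟨a3, hc3⟩ := g3
    have hne : c + 1 ≠ c + 3 := fun h => hd2 (by linear_combination -h)
    rcases claim2 (c + 1) (c + 3) hne a1 a3 hc1 hc3 with h | h
    · exact hd1 (by linear_combination h)
    · exact hd3 (by linear_combination -h)
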